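/- Optimal smoothing: take b(s,σ) = ⟪s,σ⟫ for s, σ ∈ S (the restriction of the inner product of X to S), and let P : V → S be the linear map determined by ⟪P v, σ⟫ = ⟪v, E σ⟫ for all v ∈ V, σ ∈ S. Then P v = Π_S v for all v ∈ V if and only if E σ = Π_V σ for all σ ∈ S, where Π_S and Π_V are the orthogonal projections of X onto S and onto V, respectively. -/

import Mathlib

open scoped RealInnerProductSpace

/-- **Optimal smoothing.** Take `b(s,σ) = ⟪s,σ⟫` (the restriction of the inner product
of `X` to `S`), and let `P : V → S` be determined by `⟪P v, σ⟫ = ⟪v, E σ⟫` for all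
`v ∈ V`, `σ ∈ S`. Then `P = Π_S|_V` if and only if `E = Π_V|_S`, where `Π_S`, `Π_V` are
the orthogonal projections of `X` onto `S` and `V`. -/
theorem optimal_smoothing
    {X : Type*} [NormedAddCommGroup X] [InnerProductSpace ℝ X] [CompleteSpace X]
    (V S : Submodule ℝ X) [CompleteSpace V] [FiniteDimensional ℝ S]
    (hSne : S ≠ ⊥) (hsum : V ⊔ S = ⊤)
    (E : S →ₗ[ℝ] V)
    (P : V →ₗ[ℝ] S)
    (hP : ∀ (v : V) (σ : S), ⟪((P v : X)), ((σ : X))⟫ = ⟪(v : X), ((E σ : V) : X)⟫) :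
    (∀ v : V, (P v : X) = (Submodule.orthogonalProjectionOnto S (v : X) : X)) ↔
      ∀ σ : S, ((E σ : V) : X) = (Submodule.orthogonalProjectionOnto V (σ : X) : X) := by
  constructor
  · intro h σ
    refine (Submodule.eq_starProjection_of_mem_of_inner_eq_zero ((E σ) : V).2
      fun w hw => ?_).symm
    have h1 := hP ⟨w, hw⟩ σ
    rw [h ⟨w, hw⟩] at h1
    simp only [Submodule.coe_mk] at h1
    have h2 : ⟪(Submodule.orthogonalProjectionOnto S (w : X) : X), (σ : X)⟫ = ⟪w, (σ : X)⟫ := by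
      rw [← Submodule.starProjection_apply, Submodule.inner_starProjection_left_eq_right,
        Submodule.starProjection_mem_subspace_eq_self σ]
    have h3 : ⟪w, ((E σ : V) : X)⟫ = ⟪w, (σ : X)⟫ := by rw [← h1, h2]
    rw [real_inner_comm, inner_sub_right, h3, sub_self]
  · intro h v
    refine (Submodule.eq_starProjection_of_mem_of_inner_eq_zero ((P v) : S).2
      fun w hw => ?_).symm
    have h1 := hP v ⟨w, hw⟩
    rw [h ⟨w, hw⟩] at h1
    simp only [Submodule.coe_mk] at h1
    have h2 : ⟪(v : X), (Submodule.orthogonalProjectionOnto V (w : X) : X)⟫ = ⟪(v : X), w⟫ := by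
      rw [← Submodule.starProjection_apply, ← Submodule.inner_starProjection_left_eq_right,
        Submodule.starProjection_mem_subspace_eq_self v]
    have h3 : ⟪((P v : S) : X), w⟫ = ⟪(v : X), w⟫ := by rw [h1, h2]
    rw [inner_sub_left, h3, sub_self]
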